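/- Let A be an m×L matrix with entries in {0,1} and c a vector of natural numbers of length m. If the system A·x = c has a solution over the natural numbers, then it has a solution over the natural numbers with at most m·log₂(L+1) non-zero entries. -/

import Mathlib

open Finset

/-- Swap lemma: if two disjoint sets `U₁ U₂` inside the support of a solution `b`
have equal column sums, and `U₁` is nonempty, we can find a solution with
strictly smaller support. -/
lemma boolean_swap (m L : ℕ) (A : Matrix (Fin m) (Fin L) ℕ) (c : Fin m → ℕ)
    (b : Fin L → ℕ) (hb : A.mulVec b = c)
    (U₁ U₂ : Finset (Fin L)) (hdisj : Disjoint U₁ U₂)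
    (hsum : ∀ i, ∑ j ∈ U₁, A i j = ∑ j ∈ U₂, A i j)
    (hne : U₁.Nonempty)
    (hU₁S : ∀ j ∈ U₁, b j ≠ 0) (hU₂S : ∀ j ∈ U₂, b j ≠ 0) :
    ∃ b' : Fin L → ℕ, A.mulVec b' = c ∧
      (Finset.univ.filter fun j => b' j ≠ 0).card <
        (Finset.univ.filter fun j => b j ≠ 0).card := by
  classical
  obtain ⟨j₀, hj₀, hmin⟩ := Finset.exists_min_image U₁ b hne
  set t := b j₀ with ht
  have ht1 : 1 ≤ t := Nat.one_le_iff_ne_zero.mpr (hU₁S j₀ hj₀)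
  set b' : Fin L → ℕ :=
    fun j => if j ∈ U₁ then b j - t else if j ∈ U₂ then b j + t else b j with hb'
  have hb'j₀ : b' j₀ = 0 := by simp [hb', hj₀, ht]
  refine ⟨b', ?_, ?_⟩
  · funext i
    have hbi : ∑ j, A i j * b j = c i := by
      rw [← hb]; rfl
    show ∑ j, A i j * b' j = c i
    have key : ∀ j : Fin L, (A i j : ℤ) * (b' j : ℤ) =
        (A i j : ℤ) * (b j : ℤ) + (if j ∈ U₂ then (A i j : ℤ) * t else 0)
          - (if j ∈ U₁ then (A i j : ℤ) * t else 0) := by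
      intro j
      by_cases h1 : j ∈ U₁
      · have h2 : j ∉ U₂ := Finset.disjoint_left.mp hdisj h1
        have hle : t ≤ b j := hmin j h1
        simp only [hb', h1, h2, if_true, if_false]
        push_cast [Nat.cast_sub hle]
        ring
      · by_cases h2 : j ∈ U₂ <;> simp only [hb', h1, h2, if_true, if_false] <;>
          push_cast <;> ring
    have hZ : (∑ j, (A i j : ℤ) * (b' j : ℤ)) = ∑ j, (A i j : ℤ) * (b j : ℤ) := by
      rw [Finset.sum_congr rfl (fun j _ => key j)]
      rw [Finset.sum_sub_distrib, Finset.sum_add_distrib]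
      rw [Finset.sum_ite_mem, Finset.sum_ite_mem, Finset.univ_inter, Finset.univ_inter]
      rw [← Finset.sum_mul, ← Finset.sum_mul]
      have : (∑ j ∈ U₁, (A i j : ℤ)) = ∑ j ∈ U₂, (A i j : ℤ) := by
        exact_mod_cast congrArg (Nat.cast : ℕ → ℤ) (hsum i)
      rw [this]; ring
    have : (∑ j, A i j * b' j : ℕ) = (∑ j, A i j * b j : ℕ) := by
      exact_mod_cast (by push_cast; exact hZ :
        ((∑ j, A i j * b' j : ℕ) : ℤ) = ((∑ j, A i j * b j : ℕ) : ℤ))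
    rw [this, hbi]
  · have hsub : (Finset.univ.filter fun j => b' j ≠ 0) ⊆
        (Finset.univ.filter fun j => b j ≠ 0).erase j₀ := by
      intro j hj
      rw [Finset.mem_filter] at hj
      have hj' : b' j ≠ 0 := hj.2
      have hjne : j ≠ j₀ := by
        intro hcontra; exact hj' (hcontra ▸ hb'j₀)
      refine Finset.mem_erase.mpr ⟨hjne, Finset.mem_filter.mpr ⟨Finset.mem_univ _, ?_⟩⟩
      by_cases h1 : j ∈ U₁
      · exact hU₁S j h1
      · by_cases h2 : j ∈ U₂
        · exact hU₂S j h2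
        · simpa [hb', h1, h2] using hj'
    calc (Finset.univ.filter fun j => b' j ≠ 0).card
        ≤ ((Finset.univ.filter fun j => b j ≠ 0).erase j₀).card :=
          Finset.card_le_card hsub
      _ < (Finset.univ.filter fun j => b j ≠ 0).card :=
          Finset.card_erase_lt_of_mem
            (Finset.mem_filter.mpr ⟨Finset.mem_univ _, hU₁S j₀ hj₀⟩)

theorem boolean_system_sparse_solution (m L : ℕ)
    (A : Matrix (Fin m) (Fin L) ℕ) (hA : ∀ i j, A i j = 0 ∨ A i j = 1)
    (c : Fin m → ℕ) (h : ∃ b : Fin L → ℕ, A.mulVec b = c) :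
    ∃ b : Fin L → ℕ, A.mulVec b = c ∧
      ((Finset.univ.filter (fun j => b j ≠ 0)).card : ℝ) ≤
        m * Real.logb 2 (L + 1) := by
  classical
  set P : ℕ → Prop := fun n => ∃ b : Fin L → ℕ, A.mulVec b = c ∧
      (Finset.univ.filter fun j => b j ≠ 0).card = n with hP
  have hPex : ∃ n, P n := by
    obtain ⟨b, hb⟩ := h
    exact ⟨_, b, hb, rfl⟩
  set n₀ := Nat.find hPex with hn₀
  obtain ⟨b, hb, hcard⟩ := Nat.find_spec hPex
  refine ⟨b, hb, ?_⟩
  rw [hcard]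
  by_contra hlt
  push_neg at hlt
  -- from the log inequality get the natural-number inequality (L+1)^m < 2^n₀
  have h2 : (0 : ℝ) < Real.log 2 := Real.log_pos (by norm_num)
  have hlog : (m : ℝ) * Real.log (L + 1) < (n₀ : ℝ) * Real.log 2 := by
    have := (mul_lt_mul_iff_of_pos_right h2).mpr hlt
    calc (m : ℝ) * Real.log (L + 1)
        = (m : ℝ) * (Real.logb 2 (L + 1) * Real.log 2) := by
          rw [Real.logb, div_mul_cancel₀ _ (ne_of_gt h2)]
      _ = (m : ℝ) * Real.logb 2 (L + 1) * Real.log 2 := by ring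
      _ < (n₀ : ℝ) * Real.log 2 := this
  have hpowR : ((L : ℝ) + 1) ^ m < (2 : ℝ) ^ n₀ := by
    have hL1 : (0 : ℝ) < (L : ℝ) + 1 := by positivity
    rw [← Real.log_lt_log_iff (by positivity) (by positivity)]
    rw [Real.log_pow, Real.log_pow]
    exact hlog
  have hpowN : (L + 1) ^ m < 2 ^ n₀ := by exact_mod_cast hpowR
  -- pigeonhole on subsets of the support
  set S := Finset.univ.filter fun j => b j ≠ 0 with hS
  have hSboundj : ∀ T : Finset (Fin L), ∀ i, ∑ j ∈ T, A i j < L + 1 := by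
    intro T i
    have h1 : ∑ j ∈ T, A i j ≤ ∑ j ∈ T, 1 := by
      refine Finset.sum_le_sum fun j _ => ?_
      rcases hA i j with h | h <;> omega
    have h2 : T.card ≤ L := by
      have := Finset.card_le_univ T
      simpa using this
    simp only [Finset.sum_const, smul_eq_mul, mul_one] at h1
    omega
  set f : Finset (Fin L) → (Fin m → Fin (L + 1)) :=
    fun T i => ⟨∑ j ∈ T, A i j, hSboundj T i⟩ with hf
  have hcardlt : (Finset.univ : Finset (Fin m → Fin (L + 1))).card < S.powerset.card := by
    rw [Finset.card_powerset, hcard]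
    simpa using hpowN
  obtain ⟨T₁, hT₁, T₂, hT₂, hT12, hfeq⟩ :=
    Finset.exists_ne_map_eq_of_card_lt_of_maps_to hcardlt (fun T _ => Finset.mem_univ (f T))
  have hT₁S : T₁ ⊆ S := Finset.mem_powerset.mp hT₁
  have hT₂S : T₂ ⊆ S := Finset.mem_powerset.mp hT₂
  have hsumT : ∀ i, ∑ j ∈ T₁, A i j = ∑ j ∈ T₂, A i j := by
    intro i
    have := congrFun hfeq i
    exact congrArg Fin.val this
  -- pass to the symmetric differences
  set U₁ := T₁ \ T₂ with hU₁
  set U₂ := T₂ \ T₁ with hU₂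
  have hdisj : Disjoint U₁ U₂ := disjoint_sdiff_sdiff
  have hsumU : ∀ i, ∑ j ∈ U₁, A i j = ∑ j ∈ U₂, A i j := by
    intro i
    have e1 : ∑ j ∈ T₁ ∩ T₂, A i j + ∑ j ∈ T₁ \ T₂, A i j = ∑ j ∈ T₁, A i j :=
      Finset.sum_inter_add_sum_sdiff T₁ T₂ _
    have e2 : ∑ j ∈ T₂ ∩ T₁, A i j + ∑ j ∈ T₂ \ T₁, A i j = ∑ j ∈ T₂, A i j :=
      Finset.sum_inter_add_sum_sdiff T₂ T₁ _
    rw [Finset.inter_comm] at e2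
    rw [← hU₁] at e1
    rw [← hU₂] at e2
    have := hsumT i
    omega
  have hmemS : ∀ j ∈ S, b j ≠ 0 := fun j hj => (Finset.mem_filter.mp hj).2
  have hU₁S : ∀ j ∈ U₁, b j ≠ 0 := fun j hj =>
    hmemS j (hT₁S (Finset.mem_sdiff.mp hj).1)
  have hU₂S : ∀ j ∈ U₂, b j ≠ 0 := fun j hj =>
    hmemS j (hT₂S (Finset.mem_sdiff.mp hj).1)
  have hUne : U₁.Nonempty ∨ U₂.Nonempty := by
    by_contra hcon
    push_neg at hcon
    have h1 : T₁ ⊆ T₂ := Finset.sdiff_eq_empty_iff_subset.mp hcon.1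
    have h2 : T₂ ⊆ T₁ := Finset.sdiff_eq_empty_iff_subset.mp hcon.2
    exact hT12 (Finset.Subset.antisymm h1 h2)
  have hsmaller : ∃ b' : Fin L → ℕ, A.mulVec b' = c ∧
      (Finset.univ.filter fun j => b' j ≠ 0).card <
        (Finset.univ.filter fun j => b j ≠ 0).card := by
    rcases hUne with hne | hne
    · exact boolean_swap m L A c b hb U₁ U₂ hdisj hsumU hne hU₁S hU₂S
    · exact boolean_swap m L A c b hb U₂ U₁ hdisj.symm
        (fun i => (hsumU i).symm) hne hU₂S hU₁S
  obtain ⟨b', hb', hcard'⟩ := hsmaller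
  rw [hcard] at hcard'
  exact Nat.find_min hPex hcard' ⟨b', hb', rfl⟩
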